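/- Let f : ℝ → ℝ be differentiable on the interval [a̲,ā], let [D̲,D̄] be an interval with 0 ∉ [D̲,D̄] such that f′(x) ∈ [D̲,D̄] for all x ∈ [a̲,ā], and let â ∈ [a̲,ā]. If x* ∈ [a̲,ā] satisfies f(x*) = 0, then x* belongs to the set {â − f(â)/d | d ∈ [D̲,D̄]}. In particular, x* lies in the intersection of [a̲,ā] with the interval Newton image {â − f(â)/d | d ∈ [D̲,D̄]}. -/

import Mathlib

/-- The interval Newton operator never loses a root: if `f` is differentiable
on `[al, au]` with derivative values enclosed in `[Dl, Du]` (an interval not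
containing zero), `ahat ∈ [al, au]`, and `x* ∈ [al, au]` is a root of `f`, then
`x*` belongs to the Newton image `{ahat − f(ahat)/d | d ∈ [Dl, Du]}`, hence to its
intersection with `[al, au]`. -/
theorem interval_newton_keeps_roots (f f' : ℝ → ℝ) (al au Dl Du ahat xs : ℝ)
    (hdf : ∀ x ∈ Set.Icc al au, HasDerivWithinAt f (f' x) (Set.Icc al au) x)
    (hD0 : (0 : ℝ) ∉ Set.Icc Dl Du)
    (hD : ∀ x ∈ Set.Icc al au, f' x ∈ Set.Icc Dl Du)
    (hahat : ahat ∈ Set.Icc al au)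
    (hxs : xs ∈ Set.Icc al au) (hroot : f xs = 0) :
    xs ∈ {y : ℝ | ∃ d ∈ Set.Icc Dl Du, y = ahat - f ahat / d} ∧
      xs ∈ Set.Icc al au ∩ {y : ℝ | ∃ d ∈ Set.Icc Dl Du, y = ahat - f ahat / d} := by
  have hcont : ContinuousOn f (Set.Icc al au) := fun x hx =>
    (hdf x hx).continuousWithinAt
  -- main lemma: xs ∈ Newton image
  have hmain : ∃ d ∈ Set.Icc Dl Du, xs = ahat - f ahat / d := by
    -- MVT between u < v in [al,au]
    have mvt : ∀ u v : ℝ, u ∈ Set.Icc al au → v ∈ Set.Icc al au → u < v →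
        ∃ c ∈ Set.Icc al au, f v - f u = f' c * (v - u) := by
      intro u v hu hv huv
      have hsub : Set.Icc u v ⊆ Set.Icc al au := Set.Icc_subset_Icc hu.1 hv.2
      have hderiv : ∀ x ∈ Set.Ioo u v, HasDerivAt f (f' x) x := by
        intro x hx
        have hx' : x ∈ Set.Ioo al au :=
          ⟨lt_of_le_of_lt hu.1 hx.1, lt_of_lt_of_le hx.2 hv.2⟩
        exact (hdf x (Set.Ioo_subset_Icc_self hx')).hasDerivAt
          (Icc_mem_nhds hx'.1 hx'.2)
      obtain ⟨c, hc, hc'⟩ := exists_hasDerivAt_eq_slope f f' huv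
        (hcont.mono hsub) hderiv
      refine ⟨c, Set.Ioo_subset_Icc_self (Set.Ioo_subset_Ioo hu.1 hv.2 hc), ?_⟩
      rw [hc', div_mul_cancel₀ _ (sub_ne_zero.mpr huv.ne')]
    rcases lt_trichotomy xs ahat with h | h | h
    · obtain ⟨c, hc, hc'⟩ := mvt xs ahat hxs hahat h
      have hd := hD c hc
      have hne : f' c ≠ 0 := fun h0 => hD0 (h0 ▸ hd)
      refine ⟨f' c, hd, ?_⟩
      rw [hroot, sub_zero] at hc'
      field_simp [hc']
      rw [hc']; ring
    · refine ⟨f' ahat, hD ahat hahat, ?_⟩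
      rw [← h, hroot]
      simp
    · obtain ⟨c, hc, hc'⟩ := mvt ahat xs hahat hxs h
      have hd := hD c hc
      have hne : f' c ≠ 0 := fun h0 => hD0 (h0 ▸ hd)
      refine ⟨f' c, hd, ?_⟩
      rw [hroot, zero_sub] at hc'
      field_simp [hc']
      linarith [hc']
  exact ⟨hmain, hxs, hmain⟩
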